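/- arXiv:2010.06463 — 2 statements merged into one kernel-verified Lean document; each statement's English description precedes it below -/
import Mathlib

section
/- With S, ω, δ, p⁺, p⁻ as above and S' = {p⁺ : p ∈ S} ∪ {p⁻ : p ∈ S}, let R be an axis-parallel square with |R ∩ S| ≥ 2. Then the closest pair in R ∩ (S ∪ S') is attained by a pair (p, a) where p ∈ R ∩ S and a ∈ R ∩ {p⁺, p⁻}; i.e., the closest pair is never formed by two points of S, nor by two points of S' arising from different original points, nor by a point of S' together with a different point of S. -/
noncomputable def dE (p q : ℝ × ℝ) : ℝ := Real.sqrt ((p.1 - q.1)^2 + (p.2 - q.2)^2)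

noncomputable def pplus (δ : ℝ) (ω : ℝ × ℝ → ℝ) (p : ℝ × ℝ) : ℝ × ℝ :=
  (p.1 + δ * ω p / 3, p.2)

noncomputable def pminus (δ : ℝ) (ω : ℝ × ℝ → ℝ) (p : ℝ × ℝ) : ℝ × ℝ :=
  (p.1 - δ * ω p / 3, p.2)

def square (a b ℓ : ℝ) : Set (ℝ × ℝ) :=
  {q | a ≤ q.1 ∧ q.1 ≤ a + ℓ ∧ b ≤ q.2 ∧ q.2 ≤ b + ℓ}

noncomputable def toE (p : ℝ × ℝ) : EuclideanSpace ℝ (Fin 2) := WithLp.toLp 2 ![p.1, p.2]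

lemma dE_eq_dist (p q : ℝ × ℝ) : dE p q = dist (toE p) (toE q) := by
  simp [dE, toE, EuclideanSpace.dist_eq, Fin.sum_univ_two, Real.dist_eq, sq_abs]

lemma dE_comm (p q : ℝ × ℝ) : dE p q = dE q p := by
  rw [dE_eq_dist, dE_eq_dist, dist_comm]

lemma dE_triangle (p q r : ℝ × ℝ) : dE p r ≤ dE p q + dE q r := by
  simp only [dE_eq_dist]; exact dist_triangle _ _ _

lemma dE_pos {p q : ℝ × ℝ} (h : p ≠ q) : 0 < dE p q := by
  rw [dE_eq_dist, dist_pos]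
  intro he
  apply h
  have h1 := congrArg (· 0) he
  have h2 := congrArg (· 1) he
  simp [toE] at h1 h2
  exact Prod.ext h1 h2

lemma dE_horiz (u v w : ℝ) : dE (u, w) (v, w) = |u - v| := by
  simp [dE, Real.sqrt_sq_eq_abs]

lemma dE_pplus (δ : ℝ) (ω : ℝ × ℝ → ℝ) (p : ℝ × ℝ) (h : 0 ≤ δ * ω p) :
    dE p (pplus δ ω p) = δ * ω p / 3 := by
  have : dE p (pplus δ ω p) = |p.1 - (p.1 + δ * ω p / 3)| := dE_horiz p.1 _ p.2
  rw [this]; rw [abs_of_nonpos (by linarith)]; ring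

lemma dE_pminus (δ : ℝ) (ω : ℝ × ℝ → ℝ) (p : ℝ × ℝ) (h : 0 ≤ δ * ω p) :
    dE p (pminus δ ω p) = δ * ω p / 3 := by
  have : dE p (pminus δ ω p) = |p.1 - (p.1 - δ * ω p / 3)| := dE_horiz p.1 _ p.2
  rw [this]; rw [abs_of_nonneg (by linarith)]; ring

open Classical in
theorem closest_pair_is_point_and_shift (S : Finset (ℝ × ℝ))
    (ω : ℝ × ℝ → ℝ)
    (hω : ∀ p ∈ S, 0 < ω p ∧ ω p < 1)
    (hωinj : ∀ p ∈ S, ∀ q ∈ S, p ≠ q → ω p ≠ ω q)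
    (δ : ℝ)
    (hδmin : ∀ p ∈ S, ∀ q ∈ S, p ≠ q → δ ≤ dE p q)
    (hδatt : ∃ p ∈ S, ∃ q ∈ S, p ≠ q ∧ dE p q = δ)
    (S' : Set (ℝ × ℝ))
    (hS' : S' = {x | ∃ p ∈ S, x = pplus δ ω p ∨ x = pminus δ ω p})
    (a b ℓ : ℝ)
    (hcard : 2 ≤ (S.filter (fun q => q ∈ square a b ℓ)).card)
    (x y : ℝ × ℝ) (hx : x ∈ (↑S ∪ S') ∩ square a b ℓ)
    (hy : y ∈ (↑S ∪ S') ∩ square a b ℓ) (hxy : x ≠ y)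
    (hmin : ∀ u ∈ (↑S ∪ S') ∩ square a b ℓ, ∀ v ∈ (↑S ∪ S') ∩ square a b ℓ,
      u ≠ v → dE x y ≤ dE u v) :
    ∃ p ∈ S, p ∈ square a b ℓ ∧
      ∃ c, (c = pplus δ ω p ∨ c = pminus δ ω p) ∧ c ∈ square a b ℓ ∧
        ({x, y} : Set (ℝ × ℝ)) = {p, c} := by
  -- δ is positive
  obtain ⟨pa, hpa, qa, hqa, hpqa, hatt⟩ := hδatt
  have δpos : 0 < δ := hatt ▸ dE_pos hpqa
  -- two distinct points of S in the square
  obtain ⟨p₀, hp₀f, q₀, hq₀f, hp₀q₀⟩ := Finset.one_lt_card.mp (by omega : 1 < (S.filter (fun q => q ∈ square a b ℓ)).card)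
  rw [Finset.mem_filter] at hp₀f hq₀f
  obtain ⟨hp₀S, hp₀sq⟩ := hp₀f
  obtain ⟨hq₀S, hq₀sq⟩ := hq₀f
  obtain ⟨ha1, ha2, hb1, hb2⟩ := hp₀sq
  obtain ⟨ha1', ha2', hb1', hb2'⟩ := hq₀sq
  -- the square has side length greater than 2δ/3
  have hℓ0 : 0 ≤ ℓ := by linarith
  have hδd : δ ≤ dE p₀ q₀ := hδmin p₀ hp₀S q₀ hq₀S hp₀q₀
  have hδℓ : 2 * δ / 3 < ℓ := by
    have hd2 : dE p₀ q₀ ≤ Real.sqrt (ℓ ^ 2 + ℓ ^ 2) := by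
      apply Real.sqrt_le_sqrt
      have h1 : (p₀.1 - q₀.1) ^ 2 ≤ ℓ ^ 2 := sq_le_sq' (by linarith) (by linarith)
      have h2 : (p₀.2 - q₀.2) ^ 2 ≤ ℓ ^ 2 := sq_le_sq' (by linarith) (by linarith)
      linarith
    have hδ2 : δ ^ 2 ≤ ℓ ^ 2 + ℓ ^ 2 := by
      have := Real.sq_sqrt (by positivity : (0:ℝ) ≤ ℓ ^ 2 + ℓ ^ 2)
      nlinarith [Real.sqrt_nonneg (ℓ ^ 2 + ℓ ^ 2)]
    nlinarith
  -- a witness pair at distance < δ/3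
  obtain ⟨hω₀, hω₀'⟩ := hω p₀ hp₀S
  have htpos : 0 < δ * ω p₀ := by positivity
  have htlt : δ * ω p₀ / 3 < δ / 3 := by nlinarith
  have hwit : ∃ c₀, (c₀ = pplus δ ω p₀ ∨ c₀ = pminus δ ω p₀) ∧ c₀ ∈ square a b ℓ ∧
      dE p₀ c₀ = δ * ω p₀ / 3 ∧ p₀ ≠ c₀ := by
    by_cases h : p₀.1 + δ * ω p₀ / 3 ≤ a + ℓ
    · refine ⟨pplus δ ω p₀, Or.inl rfl, ⟨by simp [pplus]; linarith, by simpa [pplus] using h,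
        hb1, hb2⟩, dE_pplus δ ω p₀ htpos.le, ?_⟩
      intro he
      have := congrArg Prod.fst he
      simp only [pplus] at this
      linarith
    · refine ⟨pminus δ ω p₀, Or.inr rfl, ⟨by simp [pminus]; linarith [htlt, hδℓ],
        by simp [pminus]; linarith, hb1, hb2⟩, dE_pminus δ ω p₀ htpos.le, ?_⟩
      intro he
      have := congrArg Prod.fst he
      simp only [pminus] at this
      linarith
  obtain ⟨c₀, hc₀def, hc₀sq, hc₀d, hc₀ne⟩ := hwit
  have hc₀S' : c₀ ∈ S' := by
    rw [hS']; exact ⟨p₀, hp₀S, hc₀def⟩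
  have hxylt : dE x y < δ / 3 := by
    have := hmin p₀ ⟨Or.inl (Finset.mem_coe.mpr hp₀S), ha1, ha2, hb1, hb2⟩ c₀
      ⟨Or.inr hc₀S', hc₀sq⟩ hc₀ne
    calc dE x y ≤ dE p₀ c₀ := this
    _ = δ * ω p₀ / 3 := hc₀d
    _ < δ / 3 := htlt
  -- classification of points of S'
  have key : ∀ z ∈ S', ∃ q ∈ S, (z = pplus δ ω q ∨ z = pminus δ ω q) ∧
      dE q z < δ / 3 := by
    intro z hz
    rw [hS'] at hz
    obtain ⟨q, hq, hcase⟩ := hz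
    obtain ⟨h1, h2⟩ := hω q hq
    have hqt : 0 ≤ δ * ω q := by positivity
    refine ⟨q, hq, hcase, ?_⟩
    have : δ * ω q / 3 < δ / 3 := by nlinarith
    rcases hcase with h | h <;> rw [h]
    · rw [dE_pplus δ ω q hqt]; exact this
    · rw [dE_pminus δ ω q hqt]; exact this
  obtain ⟨hxU, hxsq⟩ := hx
  obtain ⟨hyU, hysq⟩ := hy
  rcases hxU with hxS | hxS' <;> rcases hyU with hyS | hyS'
  · -- both in S : contradiction
    exfalso
    have := hδmin x (by exact_mod_cast hxS) y (by exact_mod_cast hyS) hxy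
    linarith
  · -- x ∈ S, y ∈ S'
    obtain ⟨q, hqS, hqdef, hqd⟩ := key y hyS'
    by_cases hxq : x = q
    · subst hxq
      exact ⟨x, by exact_mod_cast hxS, hxsq, y, hqdef, hysq, rfl⟩
    · exfalso
      have h1 := hδmin x (by exact_mod_cast hxS) q hqS hxq
      have h2 := dE_triangle x y q
      have h3 : dE y q = dE q y := dE_comm _ _
      linarith
  · -- x ∈ S', y ∈ S
    obtain ⟨q, hqS, hqdef, hqd⟩ := key x hxS'
    by_cases hyq : y = q
    · subst hyq
      exact ⟨y, by exact_mod_cast hyS, hysq, x, hqdef, hxsq, Set.pair_comm x y⟩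
    · exfalso
      have h1 := hδmin y (by exact_mod_cast hyS) q hqS hyq
      have h2 := dE_triangle y x q
      have h3 : dE x q = dE q x := dE_comm _ _
      have h4 : dE y x = dE x y := dE_comm _ _
      linarith
  · -- both in S'
    exfalso
    obtain ⟨p, hpS, hpdef, hpd⟩ := key x hxS'
    obtain ⟨q, hqS, hqdef, hqd⟩ := key y hyS'
    by_cases hpq : p = q
    · subst hpq
      -- x and y are p⁺ and p⁻
      obtain ⟨h1, h2⟩ := hω p hpS
      have htp : 0 < δ * ω p := by positivity
      have hxyd : dE x y = 2 * (δ * ω p / 3) := by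
        rcases hpdef with hx1 | hx1 <;> rcases hqdef with hy1 | hy1
        · exact absurd (hx1.trans hy1.symm) hxy
        · rw [hx1, hy1]
          have : dE (p.1 + δ * ω p / 3, p.2) (p.1 - δ * ω p / 3, p.2)
              = |p.1 + δ * ω p / 3 - (p.1 - δ * ω p / 3)| := dE_horiz _ _ _
          rw [pplus, pminus, this, abs_of_nonneg (by linarith)]; ring
        · rw [hx1, hy1]
          have : dE (p.1 - δ * ω p / 3, p.2) (p.1 + δ * ω p / 3, p.2)
              = |p.1 - δ * ω p / 3 - (p.1 + δ * ω p / 3)| := dE_horiz _ _ _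
          rw [pminus, pplus, this, abs_of_nonpos (by linarith)]; ring
        · exact absurd (hx1.trans hy1.symm) hxy
      -- p is in the square
      have hpsq : p ∈ square a b ℓ := by
        rcases hpdef with hx1 | hx1 <;> rw [hx1] at hxsq <;>
          obtain ⟨s1, s2, s3, s4⟩ := hxsq
        · rcases hqdef with hy1 | hy1
          · exact absurd (hx1.trans hy1.symm) hxy
          · rw [hy1] at hysq
            obtain ⟨t1, t2, t3, t4⟩ := hysq
            simp only [pplus, pminus] at s1 s2 t1 t2 s3 s4
            exact ⟨by linarith, by linarith, by simpa [pplus] using s3, by simpa [pplus] using s4⟩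
        · rcases hqdef with hy1 | hy1
          · rw [hy1] at hysq
            obtain ⟨t1, t2, t3, t4⟩ := hysq
            simp only [pplus, pminus] at s1 s2 t1 t2 s3 s4
            exact ⟨by linarith, by linarith, by simpa [pminus] using s3, by simpa [pminus] using s4⟩
          · exact absurd (hx1.trans hy1.symm) hxy
      have hpx : p ≠ x := by
        intro he
        rcases hpdef with hx1 | hx1 <;> rw [← he] at hx1 <;>
          have := congrArg Prod.fst hx1 <;> simp only [pplus, pminus] at this <;> linarith
      have hmm := hmin p ⟨Or.inl (by exact_mod_cast hpS), hpsq⟩ x ⟨Or.inr hxS', hxsq⟩ hpx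
      have hdpx : dE p x = δ * ω p / 3 := by
        rcases hpdef with hx1 | hx1 <;> rw [hx1]
        · exact dE_pplus δ ω p htp.le
        · exact dE_pminus δ ω p htp.le
      linarith [hmm, hxyd, hdpx, htp]
    · -- p ≠ q : distance too large
      have h1 := hδmin p hpS q hqS hpq
      have h2 := dE_triangle p x q
      have h3 := dE_triangle x y q
      have h4 : dE y q = dE q y := dE_comm _ _
      linarith
end

section
/- With S, ω, δ, S' as above and R an axis-parallel square with |R ∩ S| ≥ 2: if p ∈ R ∩ S and a ∈ {p⁺, p⁻} are such that (p, a) attains the closest-pair distance in R ∩ (S ∪ S'), then ω(p) = min{ω(q) : q ∈ R ∩ S}. -/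
lemma dE_shift (q : ℝ × ℝ) (t : ℝ) : dE q (q.1 + t, q.2) = |t| := by
  simp only [dE]
  have : (q.1 - (q.1 + t))^2 + (q.2 - q.2)^2 = t^2 := by ring
  rw [this, Real.sqrt_sq_eq_abs]

lemma dE_pos_s8 {u v : ℝ × ℝ} (h : u ≠ v) : 0 < dE u v := by
  apply Real.sqrt_pos.2
  have h' : u.1 ≠ v.1 ∨ u.2 ≠ v.2 := by
    by_contra hc
    push_neg at hc
    exact h (Prod.ext hc.1 hc.2)
  rcases h' with h1 | h2
  · nlinarith [sq_nonneg (u.2 - v.2), pow_pos (abs_pos.2 (sub_ne_zero.2 h1)) 2,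
      sq_abs (u.1 - v.1)]
  · nlinarith [sq_nonneg (u.1 - v.1), pow_pos (abs_pos.2 (sub_ne_zero.2 h2)) 2,
      sq_abs (u.2 - v.2)]

open Classical in
theorem closest_pair_gives_min_weight (S : Finset (ℝ × ℝ))
    (ω : ℝ × ℝ → ℝ)
    (hω : ∀ p ∈ S, 0 < ω p ∧ ω p < 1)
    (hωinj : ∀ p ∈ S, ∀ q ∈ S, p ≠ q → ω p ≠ ω q)
    (δ : ℝ)
    (hδmin : ∀ p ∈ S, ∀ q ∈ S, p ≠ q → δ ≤ dE p q)
    (hδatt : ∃ p ∈ S, ∃ q ∈ S, p ≠ q ∧ dE p q = δ)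
    (S' : Set (ℝ × ℝ))
    (hS' : S' = {x | ∃ p ∈ S, x = pplus δ ω p ∨ x = pminus δ ω p})
    (a b ℓ : ℝ)
    (hcard : 2 ≤ (S.filter (fun q => q ∈ square a b ℓ)).card)
    (p : ℝ × ℝ) (hp : p ∈ S) (hpR : p ∈ square a b ℓ)
    (c : ℝ × ℝ) (hc : c = pplus δ ω p ∨ c = pminus δ ω p)
    (hcR : c ∈ square a b ℓ)
    (hmin : ∀ u ∈ (↑S ∪ S') ∩ square a b ℓ, ∀ v ∈ (↑S ∪ S') ∩ square a b ℓ,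
      u ≠ v → dE p c ≤ dE u v) :
    ∀ q ∈ S, q ∈ square a b ℓ → ω p ≤ ω q := by
  intro q hq hqR
  by_contra hlt
  push_neg at hlt
  -- δ > 0
  have hδpos : 0 < δ := by
    obtain ⟨u, hu, v, hv, huv, hd⟩ := hδatt
    rw [← hd]; exact dE_pos_s8 huv
  obtain ⟨hωq0, hωq1⟩ := hω q hq
  obtain ⟨hωp0, hωp1⟩ := hω p hp
  have hℓ0 : 0 ≤ ℓ := by
    obtain ⟨h1, h2, h3, h4⟩ := hpR
    linarith
  -- bound on ℓ : δ^2 ≤ 2 ℓ^2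
  have hℓ : δ^2 ≤ 2 * ℓ^2 := by
    obtain ⟨u, hu, v, hv, huv⟩ := Finset.one_lt_card.1 (lt_of_lt_of_le one_lt_two hcard)
    rw [Finset.mem_filter] at hu hv
    obtain ⟨hu1, hu2, hu3, hu4⟩ := hu.2
    obtain ⟨hv1, hv2, hv3, hv4⟩ := hv.2
    have hδle : δ ≤ dE u v := hδmin u hu.1 v hv.1 huv
    simp only [dE] at hδle
    have hsum : (u.1 - v.1)^2 + (u.2 - v.2)^2 ≤ 2 * ℓ^2 := by nlinarith
    have hsq := Real.sq_sqrt (by positivity : (0:ℝ) ≤ (u.1 - v.1)^2 + (u.2 - v.2)^2)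
    nlinarith [Real.sqrt_nonneg ((u.1 - v.1)^2 + (u.2 - v.2)^2), hδpos.le,
      mul_self_le_mul_self hδpos.le hδle]
  set s : ℝ := δ * ω q / 3 with hs
  have hspos : 0 < s := by positivity
  have h3s : 3 * s < δ := by rw [hs]; nlinarith
  have h2s : 2 * s < ℓ := by
    by_contra hcon
    push_neg at hcon
    have h1 : ℓ * ℓ ≤ (2*s) * (2*s) := mul_self_le_mul_self hℓ0 hcon
    have h2 : (3*s) * (3*s) < δ * δ := mul_self_lt_mul_self (by positivity) h3s
    nlinarith
  -- distance from p to c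
  have hpc : dE p c = δ * ω p / 3 := by
    rcases hc with rfl | rfl
    · rw [show pplus δ ω p = (p.1 + δ * ω p / 3, p.2) from rfl, dE_shift]
      rw [abs_of_pos (by positivity)]
    · rw [show pminus δ ω p = (p.1 + (-(δ * ω p / 3)), p.2) by simp [pminus]; ring, dE_shift]
      rw [abs_neg, abs_of_pos (by positivity)]
  obtain ⟨hq1, hq2, hq3, hq4⟩ := hqR
  -- choose the shifted point of q inside R
  have key : ∃ e : ℝ × ℝ, (e = pplus δ ω q ∨ e = pminus δ ω q) ∧ e ∈ square a b ℓ ∧ dE q e = s := by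
    by_cases hcase : q.1 + s ≤ a + ℓ
    · refine ⟨pplus δ ω q, Or.inl rfl, ⟨by simp [pplus]; nlinarith, hcase, hq3, hq4⟩, ?_⟩
      rw [show pplus δ ω q = (q.1 + s, q.2) from rfl, dE_shift, abs_of_pos hspos]
    · push_neg at hcase
      refine ⟨pminus δ ω q, Or.inr rfl, ⟨?_, by simp [pminus]; nlinarith, hq3, hq4⟩, ?_⟩
      · show a ≤ q.1 - s
        nlinarith
      · rw [show pminus δ ω q = (q.1 + (-s), q.2) by simp [pminus, hs]; ring, dE_shift,
          abs_neg, abs_of_pos hspos]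
  obtain ⟨e, he, heR, hqe⟩ := key
  have heS' : e ∈ S' := by rw [hS']; exact ⟨q, hq, he⟩
  have hqne : q ≠ e := by
    intro hqeq
    rw [← hqeq] at hqe
    have : dE q q = 0 := by simp [dE]
    rw [this] at hqe
    exact absurd hqe.symm (ne_of_gt hspos)
  have := hmin q ⟨Or.inl (by exact_mod_cast hq), hq1, hq2, hq3, hq4⟩
    e ⟨Or.inr heS', heR⟩ hqne
  rw [hpc, hqe] at this
  nlinarith
end
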